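/- If f : F_2^k → F_2 is an almost lifting, then for every n ≥ k and every y ∈ F_2^n, the cyclic induced map F : F_2^n → F_2^n satisfies |F^{-1}(y)| ≤ 2^{k-1}; that is, ℓ(f) ≤ 2^{k-1}. -/

import Mathlib

/-- The cyclic (shift-invariant, periodic boundary) map on `n` bits induced by a
Boolean function `f` on `k` bits. -/
def cyc {k n : ℕ} (f : (Fin k → Bool) → Bool) (x : Fin n → Bool) : Fin n → Bool :=
  fun i => f fun j => x ⟨(i.val + j.val) % n, Nat.mod_lt _ i.pos⟩

/-- The non-wrapping induced map `F_{(m)} : F_2^m → F_2^{m-k+1}`. -/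
def ncyc {k m : ℕ} (hk : k ≤ m) (f : (Fin k → Bool) → Bool) (x : Fin m → Bool) :
    Fin (m - k + 1) → Bool :=
  fun i => f fun j => x ⟨i.val + j.val, by have h1 := i.isLt; have h2 := j.isLt; omega⟩

/-- Arithmetic helper: `D^t * (D + t) ≤ (D+1)^t * D`. -/
lemma aux_pow_ineq (D : ℕ) (hD : 1 ≤ D) : ∀ t : ℕ, D ^ t * (D + t) ≤ (D + 1) ^ t * D := by
  intro t
  induction t with
  | zero => simp
  | succ t ih =>
      have hDt : 1 ≤ D ^ t := Nat.one_le_pow _ _ hD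
      have h2 : (D + 1) * (D ^ t * (D + t)) ≤ (D + 1) * ((D + 1) ^ t * D) :=
        Nat.mul_le_mul_left _ ih
      have h3 : D ^ (t + 1) * (D + (t + 1)) ≤ (D + 1) * (D ^ t * (D + t)) := by
        have hle : D ^ t * D ≤ D ^ t * (D + t) := Nat.mul_le_mul_left _ (by omega)
        calc D ^ (t + 1) * (D + (t + 1)) = D ^ t * (D + t) * D + D ^ t * D := by ring
          _ ≤ D ^ t * (D + t) * D + D ^ t * (D + t) := Nat.add_le_add_left hle _
          _ = (D + 1) * (D ^ t * (D + t)) := by ring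
      calc D ^ (t + 1) * (D + (t + 1)) ≤ (D + 1) * (D ^ t * (D + t)) := h3
        _ ≤ (D + 1) * ((D + 1) ^ t * D) := h2
        _ = (D + 1) ^ (t + 1) * D := by ring

/-- If `f` is an almost lifting, then every fiber of every cyclic induced map has
size at most `2^{k-1}`, i.e. `ℓ(f) ≤ 2^{k-1}`. -/
theorem stmt9 {k : ℕ} (f : (Fin k → Bool) → Bool)
    (halmost : ∃ L : ℕ, ∀ n : ℕ, k ≤ n → ∀ y : Fin n → Bool,
      (Finset.univ.filter fun x : Fin n → Bool => cyc f x = y).card ≤ L) :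
    ∀ n : ℕ, k ≤ n → ∀ y : Fin n → Bool,
      (Finset.univ.filter fun x : Fin n → Bool => cyc f x = y).card ≤ 2 ^ (k - 1) := by
  obtain ⟨L, hL⟩ := halmost
  intro n hk y
  by_cases hn0 : n = 0
  · subst hn0
    calc (Finset.univ.filter fun x : Fin 0 → Bool => cyc f x = y).card
        ≤ (Finset.univ : Finset (Fin 0 → Bool)).card := Finset.card_filter_le _ _
      _ = 1 := by simp
      _ ≤ 2 ^ (k - 1) := Nat.one_le_two_pow
  have hn1 : 1 ≤ n := Nat.pos_of_ne_zero hn0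
  set D : ℕ := 2 ^ (k - 1) with hD
  set S : Finset (Fin n → Bool) :=
    Finset.univ.filter (fun x : Fin n → Bool => cyc f x = y) with hS
  set N : ℕ := S.card with hN
  -- Main counting claim: for every t ≥ 1, N^t ≤ L * D^t.
  have main : ∀ t : ℕ, 1 ≤ t → N ^ t ≤ L * D ^ t := by
    intro t ht
    have hnt : k ≤ t * n := le_trans hk (by
      calc n = 1 * n := (one_mul n).symm
        _ ≤ t * n := Nat.mul_le_mul_right n ht)
    -- concatenation map
    have hdiv : ∀ s : Fin (t * n), s.val / n < t := by
      intro s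
      exact (Nat.div_lt_iff_lt_mul hn1).mpr s.isLt
    let conc : (Fin t → (Fin n → Bool)) → (Fin (t * n) → Bool) :=
      fun x s => x ⟨s.val / n, hdiv s⟩ ⟨s.val % n, Nat.mod_lt _ hn1⟩
    have hconc_inj : Function.Injective conc := by
      intro x x' h
      funext b r
      have hlt : n * (b : ℕ) + (r : ℕ) < t * n := by
        have hb : (b : ℕ) + 1 ≤ t := b.isLt
        calc n * (b : ℕ) + (r : ℕ) < n * (b : ℕ) + n := Nat.add_lt_add_left r.isLt _
          _ = ((b : ℕ) + 1) * n := by ring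
          _ ≤ t * n := Nat.mul_le_mul_right n hb
      have := congrFun h ⟨n * (b : ℕ) + (r : ℕ), hlt⟩
      simpa [conc, Nat.mul_add_div hn1, Nat.div_eq_of_lt r.isLt,
        Nat.mul_add_mod, Nat.mod_eq_of_lt r.isLt] using this
    -- the domain: t-tuples of elements of S
    let dom : Finset (Fin t → (Fin n → Bool)) := Fintype.piFinset fun _ => S
    have hdomcard : dom.card = N ^ t := by
      rw [Fintype.card_piFinset]
      simp
      rfl
    -- the window lemma: outputs at non-wrapping positions are determined
    have window : ∀ x ∈ dom, ∀ p : Fin (t * n), (p : ℕ) % n + k ≤ n →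
        cyc f (conc x) p = y ⟨(p : ℕ) % n, Nat.mod_lt _ hn1⟩ := by
      intro x hx p hp
      have hx' : ∀ i, cyc f (x i) = y := by
        intro i
        have := (Fintype.mem_piFinset.mp hx) i
        simpa [hS] using (Finset.mem_filter.mp this).2
      set b : ℕ := (p : ℕ) / n with hb
      set r : ℕ := (p : ℕ) % n with hr
      have hbt : b < t := hdiv p
      have hpval : (p : ℕ) = n * b + r := (Nat.div_add_mod (p : ℕ) n).symm
      have hrn : r < n := Nat.mod_lt _ hn1
      have key : ∀ j : Fin k,
          conc x ⟨((p : ℕ) + (j : ℕ)) % (t * n), Nat.mod_lt _ p.pos⟩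
            = x ⟨b, hbt⟩ ⟨(r + (j : ℕ)) % n, Nat.mod_lt _ hn1⟩ := by
        intro j
        have hj : (j : ℕ) < k := j.isLt
        have hrj : r + (j : ℕ) < n := by omega
        have hplt : (p : ℕ) + (j : ℕ) < t * n := by
          have hb1 : (b + 1) * n ≤ t * n := Nat.mul_le_mul_right n hbt
          calc (p : ℕ) + (j : ℕ) = n * b + (r + (j : ℕ)) := by omega
            _ < n * b + n := Nat.add_lt_add_left hrj _
            _ = (b + 1) * n := by ring
            _ ≤ t * n := hb1
        have hmod : ((p : ℕ) + (j : ℕ)) % (t * n) = (p : ℕ) + (j : ℕ) :=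
          Nat.mod_eq_of_lt hplt
        have hsum : (p : ℕ) + (j : ℕ) = n * b + (r + (j : ℕ)) := by omega
        have hdiv2 : ((p : ℕ) + (j : ℕ)) / n = b := by
          rw [hsum, Nat.mul_add_div hn1, Nat.div_eq_of_lt hrj]
          omega
        have hmod2 : ((p : ℕ) + (j : ℕ)) % n = r + (j : ℕ) := by
          rw [hsum, Nat.mul_add_mod, Nat.mod_eq_of_lt hrj]
        have hmod3 : (r + (j : ℕ)) % n = r + (j : ℕ) := Nat.mod_eq_of_lt hrj
        show x ⟨((p : ℕ) + (j : ℕ)) % (t * n) / n, _⟩ ⟨((p : ℕ) + (j : ℕ)) % (t * n) % n, _⟩ = _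
        congr 1
        · apply Fin.ext
          show ((p : ℕ) + (j : ℕ)) % (t * n) / n = b
          rw [hmod]; exact hdiv2
        · apply Fin.ext
          show ((p : ℕ) + (j : ℕ)) % (t * n) % n = (r + (j : ℕ)) % n
          rw [hmod, hmod2, hmod3]
      calc cyc f (conc x) p
          = f (fun j => x ⟨b, hbt⟩ ⟨(r + (j : ℕ)) % n, Nat.mod_lt _ hn1⟩) := by
            show f _ = f _
            exact congrArg f (funext key)
        _ = cyc f (x ⟨b, hbt⟩) ⟨r, hrn⟩ := rfl
        _ = y ⟨r, hrn⟩ := by rw [hx' ⟨b, hbt⟩]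
    -- the output map
    let Θ : (Fin t → (Fin n → Bool)) → (Fin (t * n) → Bool) := fun x => cyc f (conc x)
    -- fibers of Θ on dom have size at most L
    have hfiber : ∀ y' ∈ dom.image Θ, (dom.filter fun x => Θ x = y').card ≤ L := by
      intro y' _
      have hinj : (dom.filter fun x => Θ x = y').card
          ≤ (Finset.univ.filter fun z : Fin (t * n) → Bool => cyc f z = y').card := by
        apply Finset.card_le_card_of_injOn conc
        · intro x hx
          rw [Finset.mem_coe]
          simp only [Finset.mem_filter, Finset.mem_univ, true_and]
          exact (Finset.mem_filter.mp hx).2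
        · intro a _ a' _ h
          exact hconc_inj h
      exact le_trans hinj (hL (t * n) hnt y')
    -- the image of Θ is small: determined outside the t(k-1) wrap positions
    have himg : (dom.image Θ).card ≤ D ^ t := by
      have hcard : Fintype.card (Fin t → Fin (k - 1) → Bool) = D ^ t := by
        simp [hD, Fintype.card_fun]
      rw [← hcard, ← Finset.card_univ]
      apply Finset.card_le_card_of_injOn
        (fun y' => fun (b : Fin t) (j : Fin (k - 1)) =>
          y' ⟨(b : ℕ) * n + (n - (k - 1)) + (j : ℕ), by
            have hb : (b : ℕ) + 1 ≤ t := b.isLt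
            have hj : (j : ℕ) < k - 1 := j.isLt
            have h1 : n - (k - 1) + (j : ℕ) < n := by omega
            calc (b : ℕ) * n + (n - (k - 1)) + (j : ℕ)
                = (b : ℕ) * n + (n - (k - 1) + (j : ℕ)) := by ring
              _ < (b : ℕ) * n + n := Nat.add_lt_add_left h1 _
              _ = ((b : ℕ) + 1) * n := by ring
              _ ≤ t * n := Nat.mul_le_mul_right n hb⟩)
      · intro _ _; exact Finset.mem_univ _
      · intro y1 hy1 y2 hy2 hgeq
        simp only [Finset.coe_image, Set.mem_image] at hy1 hy2
        obtain ⟨x1, hx1, rfl⟩ := hy1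
        obtain ⟨x2, hx2, rfl⟩ := hy2
        have hx1' : x1 ∈ dom := by simpa using hx1
        have hx2' : x2 ∈ dom := by simpa using hx2
        funext p
        set b : ℕ := (p : ℕ) / n with hb
        set r : ℕ := (p : ℕ) % n with hr
        have hbt : b < t := hdiv p
        have hrn : r < n := Nat.mod_lt _ hn1
        have hpval : (p : ℕ) = n * b + r := (Nat.div_add_mod (p : ℕ) n).symm
        by_cases hcase : r + k ≤ n
        · show cyc f (conc x1) p = cyc f (conc x2) p
          rw [window x1 hx1' p hcase, window x2 hx2' p hcase]
        · -- wrap position: read off from the free coordinates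
          have hk1 : 1 ≤ k := by omega
          have hjlt : r - (n - (k - 1)) < k - 1 := by omega
          have hfun := congrFun (congrFun hgeq ⟨b, hbt⟩) ⟨r - (n - (k - 1)), hjlt⟩
          have hpval' : (p : ℕ) = b * n + r := by rw [hpval]; ring
          have hidx : b * n + (n - (k - 1)) + (r - (n - (k - 1))) = (p : ℕ) := by omega
          have e1 : Θ x1 p = Θ x1 ⟨b * n + (n - (k - 1)) + (r - (n - (k - 1))), by
              rw [hidx]; exact p.isLt⟩ := by
            congr 1
            exact Fin.ext hidx.symm
          have e2 : Θ x2 p = Θ x2 ⟨b * n + (n - (k - 1)) + (r - (n - (k - 1))), by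
              rw [hidx]; exact p.isLt⟩ := by
            congr 1
            exact Fin.ext hidx.symm
          rw [e1, e2]
          exact hfun
    calc N ^ t = dom.card := hdomcard.symm
      _ ≤ L * (dom.image Θ).card := Finset.card_le_mul_card_image dom L hfiber
      _ ≤ L * D ^ t := Nat.mul_le_mul_left L himg
  -- conclude: N ≤ D
  by_contra hgt
  push_neg at hgt
  have hD1 : 1 ≤ D := Nat.one_le_two_pow
  set t : ℕ := L * D + 1 with htdef
  have h1 : N ^ t ≤ L * D ^ t := main t (by omega)
  have h2 : (D + 1) ^ t ≤ N ^ t := Nat.pow_le_pow_left (by omega) t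
  have h3 : D ^ t * (D + t) ≤ (D + 1) ^ t * D := aux_pow_ineq D hD1 t
  have hDt : 1 ≤ D ^ t := Nat.one_le_pow _ _ hD1
  have h4 : (D + 1) ^ t * D ≤ L * D ^ t * D := Nat.mul_le_mul_right D (le_trans h2 h1)
  have h5 : D ^ t * (D + t) ≤ D ^ t * (L * D) := by
    calc D ^ t * (D + t) ≤ L * D ^ t * D := le_trans h3 h4
      _ = D ^ t * (L * D) := by ring
  have h6 : D + t ≤ L * D := Nat.le_of_mul_le_mul_left h5 hDt
  omega
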